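/- Let A, B be symmetric d×d matrices with B positive definite, let w^{(1)},...,w^{(d)} be B-orthonormal generalized eigenvectors of (A,B) with distinct positive top-i eigenvalues λ^{(1)} > ... > λ^{(i)} > 0 ≥ λ^{(i+1)},... Define for ŵ ∈ ℝ^d the utility U(ŵ) = 2⟨ŵ, Aŵ⟩ − max(⟨ŵ, Aŵ⟩, 0)·⟨ŵ, Bŵ⟩ − 2Σ_{j<i}⟨ŵ, Bw^{(j)}⟩⟨w^{(j)}, Aŵ⟩. Then U is maximized precisely at ŵ = ±w^{(i)}, with maximal value λ^{(i)}. -/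

import Mathlib

open Matrix

private lemma decomp_aux {d : ℕ} (B : Matrix (Fin d) (Fin d) ℝ) (w : Fin d → Fin d → ℝ)
    (horth : ∀ j l : Fin d, w j ⬝ᵥ B.mulVec (w l) = if j = l then 1 else 0) :
    ∀ v : Fin d → ℝ, v = ∑ j, (w j ⬝ᵥ B.mulVec v) • w j := by
  set W : Matrix (Fin d) (Fin d) ℝ := Matrix.of w with hW
  have hWBWt : W * (B * Wᵀ) = 1 := by
    ext j l
    rw [Matrix.one_apply, ← horth j l]
    simp [Matrix.mul_apply, Matrix.mulVec, dotProduct, hW, Finset.mul_sum, Finset.sum_mul,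
      mul_comm, mul_left_comm]
  have h1 : (B * Wᵀ) * W = 1 := mul_eq_one_comm.mp hWBWt
  have h2 : (Wᵀ * W) * B = 1 := by
    rw [Matrix.mul_assoc] at h1
    exact mul_eq_one_comm.mp h1
  intro v
  have h3 : Wᵀ.mulVec (W.mulVec (B.mulVec v)) = v := by
    rw [Matrix.mulVec_mulVec, Matrix.mulVec_mulVec, h2, Matrix.one_mulVec]
  conv_lhs => rw [← h3]
  funext k
  rw [Finset.sum_apply]
  simp [Matrix.mulVec, dotProduct, Matrix.transpose_apply, hW, mul_comm]

private lemma expand_aux {d : ℕ} (A B : Matrix (Fin d) (Fin d) ℝ) (lam : Fin d → ℝ)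
    (w : Fin d → Fin d → ℝ)
    (horth : ∀ j l : Fin d, w j ⬝ᵥ B.mulVec (w l) = if j = l then 1 else 0)
    (heig : ∀ j : Fin d, A.mulVec (w j) = lam j • B.mulVec (w j))
    (v : Fin d → ℝ) (c : Fin d → ℝ) (hv : v = ∑ j, c j • w j) :
    (v ⬝ᵥ A.mulVec v = ∑ j, lam j * c j ^ 2) ∧
    (v ⬝ᵥ B.mulVec v = ∑ j, c j ^ 2) ∧
    (∀ j, v ⬝ᵥ B.mulVec (w j) = c j) ∧
    (∀ j, w j ⬝ᵥ A.mulVec v = lam j * c j) := by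
  have hwAw : ∀ j l, w j ⬝ᵥ A.mulVec (w l) = if j = l then lam l else 0 := by
    intro j l
    rw [heig l, dotProduct_smul, horth j l]
    simp [mul_ite]
  have sumdot : ∀ x : Fin d → ℝ, (∑ j, c j • w j) ⬝ᵥ x = ∑ j, c j * (w j ⬝ᵥ x) := by
    intro x
    simp only [dotProduct, Finset.sum_apply, Pi.smul_apply, smul_eq_mul, Finset.sum_mul,
      Finset.mul_sum, mul_assoc]
    rw [Finset.sum_comm]
  have dotsum : ∀ x : Fin d → ℝ, x ⬝ᵥ (∑ j, c j • w j) = ∑ j, c j * (x ⬝ᵥ w j) := by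
    intro x
    simp only [dotProduct, Finset.sum_apply, Pi.smul_apply, smul_eq_mul, Finset.mul_sum]
    rw [Finset.sum_comm]
    apply Finset.sum_congr rfl; intro j _; apply Finset.sum_congr rfl; intro k _; ring
  have dotMsum : ∀ (M : Matrix (Fin d) (Fin d) ℝ) (u : Fin d → ℝ),
      u ⬝ᵥ M.mulVec (∑ j, c j • w j) = ∑ j, c j * (u ⬝ᵥ M.mulVec (w j)) := by
    intro M u
    rw [dotProduct_mulVec, dotsum]
    simp only [← dotProduct_mulVec]
  have hwAv : ∀ j, w j ⬝ᵥ A.mulVec v = lam j * c j := by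
    intro j
    rw [hv, dotMsum]
    simp [hwAw, mul_ite, Finset.sum_ite_eq', mul_comm]
  have hvBw : ∀ j, v ⬝ᵥ B.mulVec (w j) = c j := by
    intro j
    rw [hv, sumdot]
    simp [horth, mul_ite, Finset.sum_ite_eq']
  have hwBv : ∀ j, w j ⬝ᵥ B.mulVec v = c j := by
    intro j
    rw [hv, dotMsum]
    simp [horth, mul_ite, Finset.sum_ite_eq']
  refine ⟨?_, ?_, hvBw, hwAv⟩
  · conv_lhs => rw [hv, sumdot]
    apply Finset.sum_congr rfl
    intro j _
    rw [← hv, hwAv j]; ring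
  · conv_lhs => rw [hv, sumdot]
    apply Finset.sum_congr rfl
    intro j _
    rw [← hv, hwBv j]; ring

private lemma scalar_aux {d : ℕ} (lam : Fin d → ℝ) (i : Fin d)
    (hstrict : ∀ j l : Fin d, j < l → l ≤ i → lam l < lam j)
    (hpos : 0 < lam i) (hrest : ∀ j, i < j → lam j ≤ 0)
    (c : Fin d → ℝ) :
    (2 * (∑ j, lam j * c j ^ 2) - max (∑ j, lam j * c j ^ 2) 0 * (∑ j, c j ^ 2)
      - 2 * ∑ j ∈ Finset.univ.filter (fun j : Fin d => j < i), lam j * c j ^ 2 ≤ lam i) ∧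
    (2 * (∑ j, lam j * c j ^ 2) - max (∑ j, lam j * c j ^ 2) 0 * (∑ j, c j ^ 2)
      - 2 * ∑ j ∈ Finset.univ.filter (fun j : Fin d => j < i), lam j * c j ^ 2 = lam i
      → (∀ j, j ≠ i → c j = 0) ∧ (c i = 1 ∨ c i = -1)) := by
  set a := ∑ j, lam j * c j ^ 2 with ha
  set s := ∑ j, c j ^ 2 with hs
  set p := ∑ j ∈ Finset.univ.filter (fun j : Fin d => j < i), lam j * c j ^ 2 with hp
  have hlampos : ∀ j : Fin d, j ≤ i → 0 < lam j := by
    intro j hj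
    rcases lt_or_eq_of_le hj with h | h
    · exact hpos.trans (hstrict j i h le_rfl)
    · rw [h]; exact hpos
  have hp0 : 0 ≤ p := by
    apply Finset.sum_nonneg
    intro j hj
    have hji : j < i := (Finset.mem_filter.mp hj).2
    exact mul_nonneg (hlampos j hji.le).le (sq_nonneg _)
  have hs0 : 0 ≤ s := Finset.sum_nonneg fun j _ => sq_nonneg _
  have hts : c i ^ 2 ≤ s := Finset.single_le_sum (fun j _ => sq_nonneg (c j)) (Finset.mem_univ i)
  have ht0 : 0 ≤ c i ^ 2 := sq_nonneg _
  have hsplit : p + ∑ j ∈ Finset.univ.filter (fun j : Fin d => ¬ j < i), lam j * c j ^ 2 = a :=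
    Finset.sum_filter_add_sum_filter_not _ _ _
  have hi_mem : i ∈ Finset.univ.filter (fun j : Fin d => ¬ j < i) := by simp
  have hrest0 : ∑ j ∈ (Finset.univ.filter (fun j : Fin d => ¬ j < i)).erase i,
      lam j * c j ^ 2 ≤ 0 := by
    apply Finset.sum_nonpos
    intro j hj
    have hj1 : j ≠ i := (Finset.mem_erase.mp hj).1
    have hj2 : ¬ j < i := (Finset.mem_filter.mp (Finset.mem_erase.mp hj).2).2
    have : i < j := lt_of_le_of_ne (not_lt.mp hj2) (Ne.symm hj1)
    exact mul_nonpos_of_nonpos_of_nonneg (hrest j this) (sq_nonneg _)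
  have hap : a - p ≤ lam i * c i ^ 2 := by
    have h5 := Finset.add_sum_erase _ (fun j => lam j * c j ^ 2) hi_mem
    linarith [hsplit, h5, hrest0]
  refine ⟨?_, ?_⟩ <;>
  · rcases le_or_gt a 0 with ha0 | ha0
    · rw [max_eq_right ha0]
      first
      | linarith
      | (intro h; exfalso; linarith)
    · rw [max_eq_left ha0.le]
      rcases le_or_gt s 2 with hs2 | hs2
      · have hT1 : 0 ≤ lam i * (1 - c i ^ 2) ^ 2 := mul_nonneg hpos.le (sq_nonneg _)
        have hT2 : 0 ≤ lam i * c i ^ 2 * (s - c i ^ 2) :=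
          mul_nonneg (mul_nonneg hpos.le ht0) (by linarith)
        have hT3 : 0 ≤ (2 - s) * (lam i * c i ^ 2 - (a - p)) :=
          mul_nonneg (by linarith) (by linarith)
        have hT4 : 0 ≤ p * s := mul_nonneg hp0 hs0
        have hid : lam i - (2 * a - a * s - 2 * p) =
            lam i * (1 - c i ^ 2) ^ 2 + lam i * c i ^ 2 * (s - c i ^ 2)
            + (2 - s) * (lam i * c i ^ 2 - (a - p)) + p * s := by ring
        first
        | linarith
        | (intro h
           have h1 : lam i * (1 - c i ^ 2) ^ 2 = 0 := by linarith
           have h2 : lam i * c i ^ 2 * (s - c i ^ 2) = 0 := by linarith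
           have ht1 : c i ^ 2 = 1 := by
             have := mul_eq_zero.mp h1
             rcases this with h | h
             · exact absurd h hpos.ne'
             · have := pow_eq_zero_iff (n := 2) (by norm_num) |>.mp h
               linarith
           have hs1 : s = 1 := by
             rw [ht1] at h2
             rcases mul_eq_zero.mp h2 with h | h
             · simp at h; exact absurd h hpos.ne'
             · linarith
           have hzero : ∀ j, j ≠ i → c j = 0 := by
             intro j hj
             have hsum : ∑ k ∈ Finset.univ.erase i, c k ^ 2 = 0 := by
               have h6 := Finset.add_sum_erase Finset.univ (fun k => c k ^ 2) (Finset.mem_univ i)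
               rw [← hs] at h6
               linarith [h6]
             have := (Finset.sum_eq_zero_iff_of_nonneg (fun k _ => sq_nonneg (c k))).mp hsum j
               (Finset.mem_erase.mpr ⟨hj, Finset.mem_univ j⟩)
             exact pow_eq_zero_iff (n := 2) (by norm_num) |>.mp this
           refine ⟨hzero, ?_⟩
           have : (c i - 1) * (c i + 1) = 0 := by nlinarith
           rcases mul_eq_zero.mp this with h | h
           · left; linarith
           · right; linarith)
      · have : a * (2 - s) < 0 := mul_neg_of_pos_of_neg ha0 (by linarith)
        first
        | linarith
        | (intro h; exfalso; linarith)

/-- The δ-EigenGame utility (with exact parents) is maximized precisely at ±w⁽ⁱ⁾,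
with maximal value λ⁽ⁱ⁾. -/
theorem stmt14 (d : ℕ) (A B : Matrix (Fin d) (Fin d) ℝ)
    (hA : A.IsSymm) (hB : B.PosDef)
    (lam : Fin d → ℝ) (w : Fin d → Fin d → ℝ)
    (horth : ∀ j l : Fin d, w j ⬝ᵥ B.mulVec (w l) = if j = l then 1 else 0)
    (heig : ∀ j : Fin d, A.mulVec (w j) = lam j • B.mulVec (w j))
    (i : Fin d)
    (hstrict : ∀ j l : Fin d, j < l → l ≤ i → lam l < lam j)
    (hpos : 0 < lam i)
    (hrest : ∀ j : Fin d, i < j → lam j ≤ 0) :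
    let U : (Fin d → ℝ) → ℝ := fun v =>
      2 * (v ⬝ᵥ A.mulVec v) - max (v ⬝ᵥ A.mulVec v) 0 * (v ⬝ᵥ B.mulVec v)
        - 2 * ∑ j ∈ Finset.univ.filter (fun j : Fin d => j < i),
            (v ⬝ᵥ B.mulVec (w j)) * (w j ⬝ᵥ A.mulVec v)
    (∀ v : Fin d → ℝ, U v ≤ lam i) ∧
    (∀ v : Fin d → ℝ, U v = lam i ↔ v = w i ∨ v = -w i) := by
  intro U
  have hU : ∀ v, U v =
      2 * (v ⬝ᵥ A.mulVec v) - max (v ⬝ᵥ A.mulVec v) 0 * (v ⬝ᵥ B.mulVec v)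
        - 2 * ∑ j ∈ Finset.univ.filter (fun j : Fin d => j < i),
            (v ⬝ᵥ B.mulVec (w j)) * (w j ⬝ᵥ A.mulVec v) := fun v => rfl
  have hdecomp := decomp_aux B w horth
  -- value of U in terms of coordinates
  have hUval : ∀ v : Fin d → ℝ,
      U v = 2 * (∑ j, lam j * (w j ⬝ᵥ B.mulVec v) ^ 2)
        - max (∑ j, lam j * (w j ⬝ᵥ B.mulVec v) ^ 2) 0 * (∑ j, (w j ⬝ᵥ B.mulVec v) ^ 2)
        - 2 * ∑ j ∈ Finset.univ.filter (fun j : Fin d => j < i),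
            lam j * (w j ⬝ᵥ B.mulVec v) ^ 2 := by
    intro v
    obtain ⟨e1, e2, e3, e4⟩ := expand_aux A B lam w horth heig v _ (hdecomp v)
    rw [hU v, e1, e2]
    congr 1
    congr 1
    apply Finset.sum_congr rfl
    intro j _
    rw [e3 j, e4 j]; ring
  constructor
  · intro v
    rw [hUval v]
    exact (scalar_aux lam i hstrict hpos hrest _).1
  · intro v
    constructor
    · intro h
      rw [hUval v] at h
      obtain ⟨hz, hpm⟩ := (scalar_aux lam i hstrict hpos hrest _).2 h
      have hvi : v = (w i ⬝ᵥ B.mulVec v) • w i := by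
        conv_lhs => rw [hdecomp v]
        rw [Finset.sum_eq_single i]
        · intro j _ hj
          rw [hz j hj, zero_smul]
        · intro hi; exact absurd (Finset.mem_univ i) hi
      rcases hpm with h1 | h1
      · left; rw [hvi, h1, one_smul]
      · right; rw [hvi, h1, neg_one_smul]
    · have e1 : w i ⬝ᵥ A.mulVec (w i) = lam i := by
        rw [heig i, dotProduct_smul, horth i i]
        simp
      have e2 : w i ⬝ᵥ B.mulVec (w i) = 1 := by rw [horth i i]; simp
      have e3 : ∀ j : Fin d, j ≠ i → w j ⬝ᵥ A.mulVec (w i) = 0 := by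
        intro j hj
        rw [heig i, dotProduct_smul, horth j i]
        simp [hj]
      rintro (rfl | rfl)
      · rw [hU, e1, e2]
        rw [Finset.sum_eq_zero, max_eq_left hpos.le]
        · ring
        · intro j hj
          have : j ≠ i := (Finset.mem_filter.mp hj).2.ne
          rw [e3 j this, mul_zero]
      · rw [hU]
        simp only [Matrix.mulVec_neg, dotProduct_neg, neg_dotProduct, neg_neg]
        rw [e1, e2]
        rw [Finset.sum_eq_zero, max_eq_left hpos.le]
        · ring
        · intro j hj
          have : j ≠ i := (Finset.mem_filter.mp hj).2.ne
          rw [e3 j this]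
          ring
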